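/- Let (B, Δ_B) be a quantum semigroup and V = (v_{k,l}) ∈ Mₙ(B) a representation (Δ_B(v_{k,l}) = Σ_r v_{k,r} ⊗ v_{r,l}) satisfying VV* = 1. Then for any c ∈ B and any k,l, the element v_{k,l} ⊗ c lies in the linear span of { Δ_B(a)(1 ⊗ b) : a, b ∈ B }. -/

import Mathlib

open scoped TensorProduct

/-- Let `(B, Δ)` be a quantum semigroup and `V = (v_{k,l}) ∈ Mₙ(B)` a representation
(`Δ(v_{k,l}) = Σ_r v_{k,r} ⊗ v_{r,l}`) with `VV* = 1`.  Then for any `c ∈ B` and any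
`k, l`, the element `v_{k,l} ⊗ c` lies in the span of `{Δ(a)(1 ⊗ b) : a, b ∈ B}`. -/
theorem coisometric_rep_right_density
    {B : Type*}
    [NormedRing B] [StarRing B] [CStarRing B] [NormedAlgebra ℂ B] [StarModule ℂ B] [CompleteSpace B]
    (Δ : B →ₐ[ℂ] B ⊗[ℂ] B)
    (hΔ : (Algebra.TensorProduct.assoc ℂ ℂ ℂ B B B).toAlgHom.comp
            ((Algebra.TensorProduct.map Δ (AlgHom.id ℂ B)).comp Δ)
        = (Algebra.TensorProduct.map (AlgHom.id ℂ B) Δ).comp Δ)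
    {n : ℕ} (v : Fin n → Fin n → B)
    (hrep : ∀ k l, Δ (v k l) = ∑ r, v k r ⊗ₜ[ℂ] v r l)
    (hcoisom : Matrix.of v * (Matrix.of v).conjTranspose = 1)
    (c : B) (k l : Fin n) :
    v k l ⊗ₜ[ℂ] c ∈
      Submodule.span ℂ {x : B ⊗[ℂ] B | ∃ a b : B, x = Δ a * ((1 : B) ⊗ₜ[ℂ] b)} := by
  classical
  have hentry : ∀ s : Fin n, (∑ r, v s r * star (v l r)) = if s = l then 1 else 0 := by
    intro s
    have h := Matrix.ext_iff.2 hcoisom s l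
    simpa [Matrix.mul_apply, Matrix.one_apply, Matrix.conjTranspose_apply] using h
  have key : v k l ⊗ₜ[ℂ] c = ∑ r, Δ (v k r) * ((1 : B) ⊗ₜ[ℂ] (star (v l r) * c)) := by
    have h1 : ∀ r, Δ (v k r) * ((1 : B) ⊗ₜ[ℂ] (star (v l r) * c))
        = ∑ s, v k s ⊗ₜ[ℂ] (v s r * star (v l r) * c) := by
      intro r
      rw [hrep, Finset.sum_mul]
      refine Finset.sum_congr rfl fun s _ => ?_
      rw [Algebra.TensorProduct.tmul_mul_tmul, mul_one, mul_assoc]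
    rw [Finset.sum_congr rfl fun r _ => h1 r, Finset.sum_comm]
    have h2 : ∀ s : Fin n, (∑ r, v k s ⊗ₜ[ℂ] (v s r * star (v l r) * c))
        = v k s ⊗ₜ[ℂ] ((if s = l then (1 : B) else 0) * c) := by
      intro s
      rw [← TensorProduct.tmul_sum]
      congr 1
      rw [← Finset.sum_mul, hentry s]
    rw [Finset.sum_congr rfl fun s _ => h2 s]
    simp only [ite_mul, one_mul, zero_mul, TensorProduct.tmul_ite]
    rw [Finset.sum_ite_eq' Finset.univ l (fun s => v k s ⊗ₜ[ℂ] c)]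
    simp
  rw [key]
  exact Submodule.sum_mem _ fun r _ =>
    Submodule.subset_span ⟨v k r, star (v l r) * c, rfl⟩
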